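/- arXiv:1904.08712 — 3 statements merged into one kernel-verified Lean document; each statement's English description precedes it below -/
import Mathlib

section
/- Let (V_i, f_{ij}) be an inverse system of finite-dimensional vector spaces over a field, indexed by a directed set, in which all transition maps f_{ij} : V_j → V_i (i ≤ j) are surjective. Then for every index i the canonical projection lim V_j → V_i is surjective. -/
open Module

/-- In a finite-dimensional vector space, a downward-directed nonempty family of
nonempty affine subspaces has a least element. -/
lemma aux_min {K W : Type*} [Field K] [AddCommGroup W] [Module K W] [FiniteDimensional K W]
    (S : Set (AffineSubspace K W)) (hne : S.Nonempty)
    (hS : ∀ s ∈ S, (s : Set W).Nonempty)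
    (hdir : ∀ s ∈ S, ∀ t ∈ S, ∃ u ∈ S, u ≤ s ∧ u ≤ t) :
    ∃ s ∈ S, ∀ t ∈ S, s ≤ t := by
  obtain ⟨n, ⟨s, hsS, rfl⟩, hmin⟩ :=
    wellFounded_lt.has_min ((fun s : AffineSubspace K W => finrank K s.direction) '' S)
      (hne.image _)
  refine ⟨s, hsS, fun t htS => ?_⟩
  obtain ⟨u, huS, hus, hut⟩ := hdir s hsS t htS
  have hd : u.direction ≤ s.direction := AffineSubspace.direction_le hus
  have h1 : finrank K u.direction ≤ finrank K s.direction := Submodule.finrank_mono hd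
  have h2 : ¬ finrank K u.direction < finrank K s.direction := hmin _ ⟨u, huS, rfl⟩
  have hdeq : u.direction = s.direction :=
    Submodule.eq_of_le_of_finrank_le hd (le_of_not_gt h2)
  obtain ⟨p, hp⟩ := hS u huS
  have : u = s := AffineSubspace.ext_of_direction_eq hdeq ⟨p, hp, hus hp⟩
  exact this ▸ hut

lemma aux_map_mono {K W1 W2 : Type*} [Field K] [AddCommGroup W1] [Module K W1]
    [AddCommGroup W2] [Module K W2] (g : W1 →ᵃ[K] W2) {s t : AffineSubspace K W1}
    (h : s ≤ t) : s.map g ≤ t.map g := by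
  rintro x ⟨y, hy, rfl⟩
  exact ⟨y, h hy, rfl⟩

/-- For an inverse system of finite-dimensional vector spaces over a directed set
with surjective transition maps, every canonical projection from the inverse limit
is surjective: for each `i` and `v : V i` there is a compatible family hitting `v`. -/
theorem stmt_1
    {K : Type*} [Field K] {I : Type*} [Preorder I] [IsDirected I (· ≤ ·)]
    (V : I → Type*) [∀ i, AddCommGroup (V i)] [∀ i, Module K (V i)]
    [∀ i, FiniteDimensional K (V i)]
    (f : ∀ i j, i ≤ j → V j →ₗ[K] V i)
    (hf_id : ∀ i, f i i le_rfl = LinearMap.id)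
    (hf_comp : ∀ i j k (hij : i ≤ j) (hjk : j ≤ k),
      (f i j hij).comp (f j k hjk) = f i k (hij.trans hjk))
    (hf_surj : ∀ i j (h : i ≤ j), Function.Surjective (f i j h)) :
    ∀ i, ∀ v : V i, ∃ x : ∀ j, V j,
      (∀ j k (h : j ≤ k), f j k h (x k) = x j) ∧ x i = v := by
  intro i v
  classical
  -- basic facts about maps of affine subspaces along the transition maps
  have hfapp : ∀ j k m (hjk : j ≤ k) (hkm : k ≤ m) (x : V m),
      f j k hjk (f k m hkm x) = f j m (hjk.trans hkm) x := by
    intro j k m hjk hkm x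
    rw [← LinearMap.comp_apply, hf_comp]
  have hFcomp : ∀ j k m (hjk : j ≤ k) (hkm : k ≤ m) (s : AffineSubspace K (V m)),
      (s.map (f k m hkm).toAffineMap).map (f j k hjk).toAffineMap
        = s.map (f j m (hjk.trans hkm)).toAffineMap := by
    intro j k m hjk hkm s
    rw [AffineSubspace.map_map]
    congr 1
    ext x
    exact hfapp j k m hjk hkm x
  have hFid : ∀ j (s : AffineSubspace K (V j)), s.map (f j j le_rfl).toAffineMap = s := by
    intro j s
    have : (f j j le_rfl).toAffineMap = AffineMap.id K (V j) := by
      ext x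
      simp [hf_id]
    rw [this, AffineSubspace.map_id]
  -- the poset of "admissible" families of affine subspaces
  set P : Set (∀ p : {j : I // i ≤ j}, AffineSubspace K (V p.1)) :=
    {B | (∀ p, ((B p : Set (V p.1))).Nonempty) ∧
      (∀ j k (h1 : i ≤ j) (h2 : j ≤ k),
        (B ⟨k, h1.trans h2⟩).map (f j k h2).toAffineMap ≤ B ⟨j, h1⟩) ∧
      (∀ x ∈ B ⟨i, le_rfl⟩, x = v)} with hPdef
  -- the top family : preimages of v
  set A : ∀ p : {j : I // i ≤ j}, AffineSubspace K (V p.1) := fun p =>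
    AffineSubspace.comap (f i p.1 p.2).toAffineMap (AffineSubspace.mk' v ⊥) with hAdef
  have hAmem : ∀ (p : {j : I // i ≤ j}) (x : V p.1), x ∈ A p ↔ f i p.1 p.2 x = v := by
    intro p x
    simp only [hAdef, AffineSubspace.mem_comap, LinearMap.coe_toAffineMap,
      AffineSubspace.mem_mk', vsub_eq_sub, Submodule.mem_bot, sub_eq_zero]
  have hAP : A ∈ P := by
    refine ⟨?_, ?_, ?_⟩
    · intro p
      obtain ⟨x, hx⟩ := hf_surj i p.1 p.2 v
      exact ⟨x, (hAmem p x).2 hx⟩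
    · rintro j k h1 h2 x ⟨z, hz, rfl⟩
      refine (hAmem ⟨j, h1⟩ _).2 ?_
      have hz' : f i k (h1.trans h2) z = v := (hAmem ⟨k, h1.trans h2⟩ z).1 hz
      show f i j h1 ((f j k h2).toAffineMap z) = v
      rw [LinearMap.coe_toAffineMap, hfapp i j k h1 h2 z]
      exact hz'
    · intro x hx
      have := (hAmem ⟨i, le_rfl⟩ x).1 hx
      rwa [hf_id] at this
  -- Zorn's lemma : there is a minimal admissible family
  have hzorn : ∀ c ⊆ P, IsChain (· ≥ ·) c → ∃ ub ∈ P, ∀ z ∈ c, ub ≤ z := by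
    intro c hcP hc
    rcases c.eq_empty_or_nonempty with rfl | ⟨B0, hB0⟩
    · exact ⟨A, hAP, by simp⟩
    · have key : ∀ p : {j : I // i ≤ j},
          ∃ s ∈ (fun B : ∀ p : {j : I // i ≤ j}, AffineSubspace K (V p.1) => B p) '' c,
          ∀ t ∈ (fun B : ∀ p : {j : I // i ≤ j}, AffineSubspace K (V p.1) => B p) '' c,
          s ≤ t := by
        intro p
        apply aux_min
        · exact ⟨B0 p, B0, hB0, rfl⟩
        · rintro s ⟨B1, hB1, rfl⟩
          exact (hcP hB1).1 p
        · rintro s ⟨B1, hB1, rfl⟩ t ⟨B2, hB2, rfl⟩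
          rcases hc.total hB1 hB2 with h12 | h21
          · exact ⟨B2 p, ⟨B2, hB2, rfl⟩, h12 p, le_rfl⟩
          · exact ⟨B1 p, ⟨B1, hB1, rfl⟩, le_rfl, h21 p⟩
      choose L hLmem hLmin using key
      refine ⟨L, ⟨?_, ?_, ?_⟩, ?_⟩
      · intro p
        obtain ⟨B1, hB1, hEq⟩ := hLmem p
        rw [← hEq]
        exact (hcP hB1).1 p
      · intro j k h1 h2
        obtain ⟨B2, hB2, hEq⟩ := hLmem ⟨j, h1⟩
        calc (L ⟨k, h1.trans h2⟩).map (f j k h2).toAffineMap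
            ≤ (B2 ⟨k, h1.trans h2⟩).map (f j k h2).toAffineMap :=
              aux_map_mono _ (hLmin ⟨k, h1.trans h2⟩ _ ⟨B2, hB2, rfl⟩)
          _ ≤ B2 ⟨j, h1⟩ := (hcP hB2).2.1 j k h1 h2
          _ = L ⟨j, h1⟩ := hEq
      · intro x hx
        obtain ⟨B2, hB2, hEq⟩ := hLmem ⟨i, le_rfl⟩
        refine (hcP hB2).2.2 x ?_
        rw [show B2 ⟨i, le_rfl⟩ = L ⟨i, le_rfl⟩ from hEq]
        exact hx
      · intro B1 hB1 p
        exact hLmin p _ ⟨B1, hB1, rfl⟩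
  obtain ⟨B, hBP, hBmax'⟩ :=
    zorn_le₀ (α := (∀ p : {j : I // i ≤ j}, AffineSubspace K (V p.1))ᵒᵈ) P
      (fun c hc hchain => hzorn c hc hchain)
  have hBmin : ∀ C, C ∈ P → (∀ p, C p ≤ B p) → ∀ p, B p ≤ C p := by
    intro C hC hle
    exact hBmax' hC (fun p => hle p)
  -- Step A : the minimal family has "surjective" transitions
  have keyA : ∀ (j : I) (h : i ≤ j), ∃ s ∈ {s | ∃ k, ∃ hk : j ≤ k,
        s = (B ⟨k, h.trans hk⟩).map (f j k hk).toAffineMap},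
      ∀ t ∈ {s | ∃ k, ∃ hk : j ≤ k,
        s = (B ⟨k, h.trans hk⟩).map (f j k hk).toAffineMap}, s ≤ t := by
    intro j h
    apply aux_min
    · exact ⟨B ⟨j, h⟩, j, le_rfl, (hFid j (B ⟨j, h⟩)).symm⟩
    · rintro s ⟨k, hk, rfl⟩
      exact (hBP.1 ⟨k, h.trans hk⟩).image _
    · rintro s ⟨k1, hk1, rfl⟩ t ⟨k2, hk2, rfl⟩
      obtain ⟨m, hm1, hm2⟩ := directed_of (· ≤ ·) k1 k2
      refine ⟨(B ⟨m, h.trans (hk1.trans hm1)⟩).map (f j m (hk1.trans hm1)).toAffineMap,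
        ⟨m, hk1.trans hm1, rfl⟩, ?_, ?_⟩
      · rw [← hFcomp j k1 m hk1 hm1]
        exact aux_map_mono _ (hBP.2.1 k1 m (h.trans hk1) hm1)
      · rw [show hk1.trans hm1 = hk2.trans hm2 from rfl, ← hFcomp j k2 m hk2 hm2]
        exact aux_map_mono _ (hBP.2.1 k2 m (h.trans hk2) hm2)
  choose B'' hB'mem' hB'min' using keyA
  set B' : ∀ p : {j : I // i ≤ j}, AffineSubspace K (V p.1) :=
    fun p => B'' p.1 p.2 with hB'def
  have hB'mem : ∀ p : {j : I // i ≤ j}, ∃ k, ∃ hk : p.1 ≤ k,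
      B' p = (B ⟨k, p.2.trans hk⟩).map (f p.1 k hk).toAffineMap :=
    fun p => hB'mem' p.1 p.2
  have hB'min : ∀ (p : {j : I // i ≤ j}) (k : I) (hk : p.1 ≤ k),
      B' p ≤ (B ⟨k, p.2.trans hk⟩).map (f p.1 k hk).toAffineMap :=
    fun p k hk => hB'min' p.1 p.2 _ ⟨k, hk, rfl⟩
  have hB'leB : ∀ p, B' p ≤ B p := by
    intro p
    have := hB'min p p.1 le_rfl
    rwa [hFid p.1 (B ⟨p.1, p.2.trans le_rfl⟩)] at this
  have hB'P : B' ∈ P := by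
    refine ⟨?_, ?_, ?_⟩
    · intro p
      obtain ⟨k, hk, hEq⟩ := hB'mem p
      rw [hEq]
      exact (hBP.1 ⟨k, p.2.trans hk⟩).image _
    · intro j k h1 h2
      obtain ⟨l0, hl0, hEq⟩ := hB'mem ⟨j, h1⟩
      obtain ⟨m, hm1, hm2⟩ := directed_of (· ≤ ·) l0 k
      calc (B' ⟨k, h1.trans h2⟩).map (f j k h2).toAffineMap
          ≤ ((B ⟨m, (h1.trans h2).trans hm2⟩).map (f k m hm2).toAffineMap).map
              (f j k h2).toAffineMap :=
            aux_map_mono _ (hB'min ⟨k, h1.trans h2⟩ m hm2)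
        _ = (B ⟨m, (h1.trans h2).trans hm2⟩).map (f j m (h2.trans hm2)).toAffineMap :=
            hFcomp j k m h2 hm2 _
        _ = ((B ⟨m, (h1.trans h2).trans hm2⟩).map (f l0 m hm1).toAffineMap).map
              (f j l0 hl0).toAffineMap := (hFcomp j l0 m hl0 hm1 _).symm
        _ ≤ (B ⟨l0, h1.trans hl0⟩).map (f j l0 hl0).toAffineMap :=
            aux_map_mono _ (hBP.2.1 l0 m (h1.trans hl0) hm1)
        _ = B' ⟨j, h1⟩ := hEq.symm
    · intro x hx
      exact hBP.2.2 x (hB'leB ⟨i, le_rfl⟩ hx)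
  have hsurjB : ∀ (j k : I) (h1 : i ≤ j) (h2 : j ≤ k),
      B ⟨j, h1⟩ ≤ (B ⟨k, h1.trans h2⟩).map (f j k h2).toAffineMap := by
    intro j k h1 h2
    exact (hBmin B' hB'P hB'leB ⟨j, h1⟩).trans (hB'min ⟨j, h1⟩ k h2)
  -- Step B : the minimal family consists of singletons
  have hsingle : ∀ (p : {j : I // i ≤ j}), ∀ b ∈ B p, ∀ y ∈ B p, y = b := by
    rintro ⟨j0, h0⟩ b hb
    set X : ∀ m, j0 ≤ m → AffineSubspace K (V m) := fun m hm0 =>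
      B ⟨m, h0.trans hm0⟩ ⊓
        AffineSubspace.comap (f j0 m hm0).toAffineMap (AffineSubspace.mk' b ⊥) with hXdef
    have hXmem : ∀ m (hm0 : j0 ≤ m) (x : V m),
        x ∈ X m hm0 ↔ x ∈ B ⟨m, h0.trans hm0⟩ ∧ f j0 m hm0 x = b := by
      intro m hm0 x
      simp only [hXdef, AffineSubspace.mem_inf_iff, AffineSubspace.mem_comap,
        LinearMap.coe_toAffineMap, AffineSubspace.mem_mk', vsub_eq_sub,
        Submodule.mem_bot, sub_eq_zero]
    have hXne : ∀ m (hm0 : j0 ≤ m), ((X m hm0 : Set (V m))).Nonempty := by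
      intro m hm0
      obtain ⟨x, hx, hfx⟩ := hsurjB j0 m h0 hm0 hb
      exact ⟨x, (hXmem m hm0 x).2 ⟨hx, hfx⟩⟩
    have hXclosed : ∀ m1 m (hm0 : j0 ≤ m1) (hm : m1 ≤ m),
        (X m (hm0.trans hm)).map (f m1 m hm).toAffineMap ≤ X m1 hm0 := by
      rintro m1 m hm0 hm x ⟨z, hz, rfl⟩
      obtain ⟨hz1, hz2⟩ := (hXmem m (hm0.trans hm) z).1 hz
      refine (hXmem m1 hm0 _).2 ⟨?_, ?_⟩
      · exact hBP.2.1 m1 m (h0.trans hm0) hm ⟨z, hz1, rfl⟩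
      · show f j0 m1 hm0 ((f m1 m hm).toAffineMap z) = b
        rw [LinearMap.coe_toAffineMap, hfapp j0 m1 m hm0 hm z]
        exact hz2
    have keyB : ∀ (k : I) (hk : i ≤ k), ∃ s ∈ {s | ∃ m, ∃ hm : k ≤ m, ∃ hm0 : j0 ≤ m,
          s = (X m hm0).map (f k m hm).toAffineMap},
        ∀ t ∈ {s | ∃ m, ∃ hm : k ≤ m, ∃ hm0 : j0 ≤ m,
          s = (X m hm0).map (f k m hm).toAffineMap}, s ≤ t := by
      intro k hk
      apply aux_min
      · obtain ⟨m, hm1, hm2⟩ := directed_of (· ≤ ·) k j0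
        exact ⟨_, m, hm1, hm2, rfl⟩
      · rintro s ⟨m, hm, hm0, rfl⟩
        exact (hXne m hm0).image _
      · rintro s ⟨m1, hm1, hm01, rfl⟩ t ⟨m2, hm2, hm02, rfl⟩
        obtain ⟨m, hmm1, hmm2⟩ := directed_of (· ≤ ·) m1 m2
        refine ⟨(X m (hm01.trans hmm1)).map (f k m (hm1.trans hmm1)).toAffineMap,
          ⟨m, hm1.trans hmm1, hm01.trans hmm1, rfl⟩, ?_, ?_⟩
        · rw [← hFcomp k m1 m hm1 hmm1]
          exact aux_map_mono _ (hXclosed m1 m hm01 hmm1)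
        · rw [show hm01.trans hmm1 = hm02.trans hmm2 from rfl,
            show hm1.trans hmm1 = hm2.trans hmm2 from rfl, ← hFcomp k m2 m hm2 hmm2]
          exact aux_map_mono _ (hXclosed m2 m hm02 hmm2)
    choose C'' hCmem' hCmin' using keyB
    set C : ∀ p : {j : I // i ≤ j}, AffineSubspace K (V p.1) :=
      fun p => C'' p.1 p.2 with hCdef
    have hCmem : ∀ p : {j : I // i ≤ j}, ∃ m, ∃ hm : p.1 ≤ m, ∃ hm0 : j0 ≤ m,
        C p = (X m hm0).map (f p.1 m hm).toAffineMap := fun p => hCmem' p.1 p.2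
    have hCmin : ∀ (p : {j : I // i ≤ j}) (m : I) (hm : p.1 ≤ m) (hm0 : j0 ≤ m),
        C p ≤ (X m hm0).map (f p.1 m hm).toAffineMap :=
      fun p m hm hm0 => hCmin' p.1 p.2 _ ⟨m, hm, hm0, rfl⟩
    have hCleB : ∀ p, C p ≤ B p := by
      rintro ⟨k, hk⟩
      obtain ⟨m, hm, hm0, hEq⟩ := hCmem ⟨k, hk⟩
      rw [hEq]
      calc (X m hm0).map (f k m hm).toAffineMap
          ≤ (B ⟨m, h0.trans hm0⟩).map (f k m hm).toAffineMap :=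
            aux_map_mono _ inf_le_left
        _ ≤ B ⟨k, hk⟩ := hBP.2.1 k m hk hm
    have hCP : C ∈ P := by
      refine ⟨?_, ?_, ?_⟩
      · intro p
        obtain ⟨m, hm, hm0, hEq⟩ := hCmem p
        rw [hEq]
        exact (hXne m hm0).image _
      · intro j k h1 h2
        obtain ⟨m0, hm0, hm00, hEq⟩ := hCmem ⟨j, h1⟩
        obtain ⟨m, hmm1, hmm2⟩ := directed_of (· ≤ ·) m0 k
        calc (C ⟨k, h1.trans h2⟩).map (f j k h2).toAffineMap
            ≤ ((X m (hm00.trans hmm1)).map (f k m hmm2).toAffineMap).map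
                (f j k h2).toAffineMap :=
              aux_map_mono _ (hCmin ⟨k, h1.trans h2⟩ m hmm2 (hm00.trans hmm1))
          _ = (X m (hm00.trans hmm1)).map (f j m (h2.trans hmm2)).toAffineMap :=
              hFcomp j k m h2 hmm2 _
          _ = ((X m (hm00.trans hmm1)).map (f m0 m hmm1).toAffineMap).map
                (f j m0 hm0).toAffineMap := (hFcomp j m0 m hm0 hmm1 _).symm
          _ ≤ (X m0 hm00).map (f j m0 hm0).toAffineMap :=
              aux_map_mono _ (hXclosed m0 m hm00 hmm1)
          _ = C ⟨j, h1⟩ := hEq.symm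
      · intro x hx
        exact hBP.2.2 x (hCleB ⟨i, le_rfl⟩ hx)
    intro y hy
    have hyC : y ∈ C ⟨j0, h0⟩ := hBmin C hCP hCleB ⟨j0, h0⟩ hy
    obtain ⟨m, hm, hm0, hEq⟩ := hCmem ⟨j0, h0⟩
    rw [hEq] at hyC
    obtain ⟨x, hx, rfl⟩ := hyC
    exact ((hXmem m hm0 x).1 hx).2
  -- extract the unique elements
  choose y hy using hBP.1
  have hycompat : ∀ (j k : I) (h1 : i ≤ j) (h2 : j ≤ k),
      f j k h2 (y ⟨k, h1.trans h2⟩) = y ⟨j, h1⟩ := by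
    intro j k h1 h2
    have : f j k h2 (y ⟨k, h1.trans h2⟩) ∈ B ⟨j, h1⟩ :=
      hBP.2.1 j k h1 h2 ⟨y ⟨k, h1.trans h2⟩, hy ⟨k, h1.trans h2⟩, rfl⟩
    exact hsingle ⟨j, h1⟩ (y ⟨j, h1⟩) (hy ⟨j, h1⟩) _ this
  have hyi : y ⟨i, le_rfl⟩ = v := hBP.2.2 _ (hy ⟨i, le_rfl⟩)
  -- build the global thread
  choose k hk1 hk2 using fun j => directed_of (· ≤ ·) j i
  refine ⟨fun j => f j (k j) (hk1 j) (y ⟨k j, hk2 j⟩), ?_, ?_⟩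
  · intro j l h
    obtain ⟨m, hm1, hm2⟩ := directed_of (· ≤ ·) (k j) (k l)
    have e1 : f (k l) m hm2 (y ⟨m, (hk2 l).trans hm2⟩) = y ⟨k l, hk2 l⟩ :=
      hycompat (k l) m (hk2 l) hm2
    have e2 : f (k j) m hm1 (y ⟨m, (hk2 j).trans hm1⟩) = y ⟨k j, hk2 j⟩ :=
      hycompat (k j) m (hk2 j) hm1
    show f j l h (f l (k l) (hk1 l) (y ⟨k l, hk2 l⟩))
        = f j (k j) (hk1 j) (y ⟨k j, hk2 j⟩)
    rw [← e1, ← e2, hfapp l (k l) m (hk1 l) hm2, hfapp j l m h ((hk1 l).trans hm2),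
      hfapp j (k j) m (hk1 j) hm1]
  · show f i (k i) (hk1 i) (y ⟨k i, hk2 i⟩) = v
    exact (hycompat i (k i) le_rfl (hk1 i)).trans hyi
end

section
/- Let K be a field, V a K-vector space, and S₁, S₂ subspaces of V. Inside the symmetric algebra Sym(V), the intersection of the subalgebras generated by S₁ and by S₂ equals the subalgebra generated by S₁ ∩ S₂; that is, Sym(S₁) ∩ Sym(S₂) = Sym(S₁ ∩ S₂) as subalgebras of Sym(V). -/
open MvPolynomial Submodule Set

/-- If `a, b` are disjoint subsets of a linearly independent set `s`,
their spans are disjoint. -/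
lemma aux_disjoint_span {K M : Type*} [Field K] [AddCommGroup M] [Module K M]
    {s a b : Set M} (hind : LinearIndependent K ((↑) : s → M))
    (ha : a ⊆ s) (hb : b ⊆ s) (hab : Disjoint a b) :
    Disjoint (Submodule.span K a) (Submodule.span K b) := by
  have h1 : ((↑) : s → M) '' (((↑) : s → M) ⁻¹' a) = a := by
    rw [Subtype.image_preimage_coe]
    exact Set.inter_eq_self_of_subset_right ha
  have h2 : ((↑) : s → M) '' (((↑) : s → M) ⁻¹' b) = b := by
    rw [Subtype.image_preimage_coe]
    exact Set.inter_eq_self_of_subset_right hb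
  have := hind.disjoint_span_image (s := ((↑) : s → M) ⁻¹' a)
    (t := ((↑) : s → M) ⁻¹' b) (hab.preimage _)
  rwa [h1, h2] at this

lemma aux_adjoin_X_image {K : Type*} [Field K] {σ : Type*} (t : Set σ) :
    Algebra.adjoin K (MvPolynomial.X '' t : Set (MvPolynomial σ K)) =
      MvPolynomial.supported K t := rfl

lemma aux_supported_inf {K : Type*} [Field K] {σ : Type*} (t₁ t₂ : Set σ) :
    MvPolynomial.supported K t₁ ⊓ MvPolynomial.supported K t₂ =
      MvPolynomial.supported K (t₁ ∩ t₂) := by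
  classical
  ext p
  simp [MvPolynomial.mem_supported, Set.subset_inter_iff]

lemma exists_linearIndependent_extension {K V : Type*} [DivisionRing K] [AddCommGroup V]
    [Module K V] {s t : Set V} (hs : LinearIndependent K ((↑) : s → V)) (hst : s ⊆ t) :
    ∃ b ⊆ t, s ⊆ b ∧ t ⊆ span K b ∧ LinearIndependent K ((↑) : b → V) :=
  exists_linearIndepOn_id_extension hs hst

/-- Inside the symmetric algebra `Sym(V)` on a `K`-vector space `V` — realized as the
polynomial algebra `MvPolynomial σ K` on a basis `σ` of `V`, with `V` identified with
the linear span of the variables — for subspaces `S₁, S₂ ⊆ V` one has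
`Sym(S₁) ∩ Sym(S₂) = Sym(S₁ ∩ S₂)`, where `Sym(S)` is the subalgebra generated by `S`. -/
theorem stmt_2 {K : Type*} [Field K] (σ : Type*)
    (S₁ S₂ : Submodule K (MvPolynomial σ K))
    (h₁ : S₁ ≤ Submodule.span K (Set.range (MvPolynomial.X : σ → MvPolynomial σ K)))
    (h₂ : S₂ ≤ Submodule.span K (Set.range (MvPolynomial.X : σ → MvPolynomial σ K))) :
    Algebra.adjoin K (S₁ : Set (MvPolynomial σ K)) ⊓
        Algebra.adjoin K (S₂ : Set (MvPolynomial σ K)) =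
      Algebra.adjoin K ((S₁ ⊓ S₂ : Submodule K (MvPolynomial σ K)) : Set (MvPolynomial σ K)) := by
  classical
  set M := MvPolynomial σ K
  set V : Submodule K M := Submodule.span K (Set.range (MvPolynomial.X : σ → M)) with hVdef
  -- a linearly independent set spanning `S₁ ⊓ S₂`
  obtain ⟨s₀, hs₀W, hspan₀, hind₀⟩ :=
    exists_linearIndependent K ((S₁ ⊓ S₂ : Submodule K M) : Set M)
  rw [Submodule.span_eq] at hspan₀
  -- extend it inside `S₁`
  obtain ⟨s₁, hs₁S, hs₀s₁, hS₁sub, hind₁⟩ :=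
    exists_linearIndependent_extension (t := (S₁ : Set M)) hind₀
      (hs₀W.trans (fun x hx => (Submodule.mem_inf.1 hx).1))
  have hspan₁ : Submodule.span K s₁ = S₁ := le_antisymm (Submodule.span_le.2 hs₁S)
    (by rw [← S₁.span_eq]; exact Submodule.span_le.2 hS₁sub)
  -- extend it inside `S₂`
  obtain ⟨s₂, hs₂S, hs₀s₂, hS₂sub, hind₂⟩ :=
    exists_linearIndependent_extension (t := (S₂ : Set M)) hind₀
      (hs₀W.trans (fun x hx => (Submodule.mem_inf.1 hx).2))
  have hspan₂ : Submodule.span K s₂ = S₂ := le_antisymm (Submodule.span_le.2 hs₂S)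
    (by rw [← S₂.span_eq]; exact Submodule.span_le.2 hS₂sub)
  -- `s₁ ∩ s₂ = s₀`
  have hs12 : s₁ ∩ s₂ = s₀ := by
    refine Set.Subset.antisymm ?_ (Set.subset_inter hs₀s₁ hs₀s₂)
    intro x hx
    by_contra hxs₀
    have hxW : x ∈ S₁ ⊓ S₂ := ⟨hs₁S hx.1, hs₂S hx.2⟩
    have hxspan : x ∈ Submodule.span K s₀ := hspan₀ ▸ hxW
    have hsub : s₀ ⊆ s₁ \ {x} := fun y hy =>
      ⟨hs₀s₁ hy, fun h => hxs₀ (h ▸ hy)⟩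
    have hx' : x ∈ Submodule.span K (s₁ \ {x}) := Submodule.span_mono hsub hxspan
    have himg : ((↑) : s₁ → M) '' (((↑) : s₁ → M) ⁻¹' (s₁ \ {x})) = s₁ \ {x} := by
      rw [Subtype.image_preimage_coe]
      exact Set.inter_eq_self_of_subset_right Set.diff_subset
    have hnot := hind₁.notMem_span_image (s := ((↑) : s₁ → M) ⁻¹' (s₁ \ {x}))
      (x := ⟨x, hx.1⟩) (by simp)
    rw [himg] at hnot
    exact hnot hx'
  -- the union `s₁ ∪ s₂` is linearly independent
  have hset : s₁ ∪ s₂ = s₁ ∪ (s₂ \ s₀) := by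
    ext y
    constructor
    · rintro (h | h)
      · exact Or.inl h
      · by_cases hy : y ∈ s₀
        · exact Or.inl (hs₀s₁ hy)
        · exact Or.inr ⟨h, hy⟩
    · rintro (h | h)
      · exact Or.inl h
      · exact Or.inr h.1
  have hdisj : Disjoint (Submodule.span K s₁) (Submodule.span K (s₂ \ s₀)) := by
    rw [disjoint_def]
    intro v hv1 hv2
    have hvS₂ : v ∈ S₂ := by
      have : Submodule.span K (s₂ \ s₀) ≤ S₂ :=
        Submodule.span_le.2 (Set.diff_subset.trans hs₂S)
      exact this hv2
    have hvW : v ∈ S₁ ⊓ S₂ := ⟨hspan₁ ▸ hv1, hvS₂⟩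
    have hv0 : v ∈ Submodule.span K s₀ := hspan₀ ▸ hvW
    have hd : Disjoint (Submodule.span K s₀) (Submodule.span K (s₂ \ s₀)) :=
      aux_disjoint_span hind₂ hs₀s₂ Set.diff_subset disjoint_sdiff_right
    exact disjoint_def.1 hd v hv0 hv2
  have hBunion : LinearIndependent K ((↑) : ↥(s₁ ∪ s₂) → M) := by
    rw [hset]
    exact LinearIndepOn.id_union hind₁ (LinearIndepOn.mono hind₂ Set.diff_subset) hdisj
  -- extend to a spanning independent set `B` of `V`
  have hsubV : s₁ ∪ s₂ ⊆ (V : Set M) :=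
    Set.union_subset (hs₁S.trans h₁) (hs₂S.trans h₂)
  obtain ⟨B, hBV, hsB, hVsub, hBind⟩ := exists_linearIndependent_extension hBunion hsubV
  have hspanB : Submodule.span K B = V := le_antisymm (Submodule.span_le.2 hBV)
    (by rw [← V.span_eq]; exact Submodule.span_le.2 hVsub)
  -- bases
  have hXind : LinearIndependent K (MvPolynomial.X : σ → M) :=
    MvPolynomial.linearIndependent_X (σ := σ) (R := K)
  have hXmem : ∀ i : σ, MvPolynomial.X i ∈ V := fun i =>
    Submodule.subset_span (Set.mem_range_self i)
  let bX : Module.Basis σ K ↥V := Module.Basis.span hXind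
  have hbX : ∀ i : σ, bX i = ⟨MvPolynomial.X i, hXmem i⟩ :=
    fun i => Module.Basis.span_apply hXind i
  let bB : Module.Basis ↥B K ↥V :=
    (Module.Basis.span hBind).map (LinearEquiv.ofEq _ _ (by rw [Subtype.range_coe, hspanB]))
  have hbB : ∀ x : ↥B, (bB x : M) = ↑x := fun x => by
    simp [bB, Module.Basis.span_apply]
  let e : ↥B ≃ σ := bB.indexEquiv bX
  let φ : ↥V ≃ₗ[K] ↥V := bX.equiv bB e.symm
  set g : σ → M := fun i => ↑(φ ⟨MvPolynomial.X i, hXmem i⟩) with hg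
  set g' : σ → M := fun i => ↑(φ.symm ⟨MvPolynomial.X i, hXmem i⟩) with hg'
  set Φ : M →ₐ[K] M := MvPolynomial.aeval g with hΦ
  set Ψ : M →ₐ[K] M := MvPolynomial.aeval g' with hΨ
  -- key evaluation lemma
  have key : ∀ (ψ : ↥V →ₗ[K] M) (f : σ → M),
      (∀ i, f i = ψ ⟨MvPolynomial.X i, hXmem i⟩) →
      ∀ v (hv : v ∈ V), MvPolynomial.aeval f v = ψ ⟨v, hv⟩ := by
    intro ψ f hf v hv
    induction hv using Submodule.span_induction with
    | mem x hx =>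
      obtain ⟨i, rfl⟩ := hx
      simpa using hf i
    | zero =>
      have : (⟨0, Submodule.zero_mem V⟩ : ↥V) = 0 := rfl
      simp [this]
    | add x y hx hy ihx ihy =>
      have : (⟨x + y, Submodule.add_mem V hx hy⟩ : ↥V) =
          ⟨x, hx⟩ + ⟨y, hy⟩ := rfl
      rw [map_add, ihx, ihy, this, map_add]
    | smul a x hx ih =>
      have : (⟨a • x, Submodule.smul_mem V a hx⟩ : ↥V) = a • ⟨x, hx⟩ := rfl
      rw [map_smul, ih, this, map_smul]
  have hΦv : ∀ v (hv : v ∈ V), Φ v = ↑(φ ⟨v, hv⟩) :=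
    key (V.subtype.comp (φ : ↥V →ₗ[K] ↥V)) g (fun i => rfl)
  have hΨv : ∀ v (hv : v ∈ V), Ψ v = ↑(φ.symm ⟨v, hv⟩) :=
    key (V.subtype.comp (φ.symm : ↥V →ₗ[K] ↥V)) g' (fun i => rfl)
  -- `Ψ` is a two-sided inverse of `Φ`
  have hΨΦ : Ψ.comp Φ = AlgHom.id K M := by
    apply MvPolynomial.algHom_ext
    intro i
    have h1 : Φ (MvPolynomial.X i) = ↑(φ ⟨MvPolynomial.X i, hXmem i⟩) :=
      MvPolynomial.aeval_X _ i
    rw [AlgHom.comp_apply, h1, AlgHom.id_apply,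
      hΨv _ (φ ⟨MvPolynomial.X i, hXmem i⟩).2]
    simp
  have hΦinj : Function.Injective Φ := by
    intro a b hab
    have ha := AlgHom.congr_fun hΨΦ a
    have hb := AlgHom.congr_fun hΨΦ b
    simp only [AlgHom.comp_apply, AlgHom.id_apply] at ha hb
    rw [← ha, ← hb, hab]
  -- value of `Φ` on the variables indexed through `e`
  have hΦX : ∀ x : ↥B, Φ (MvPolynomial.X (e x)) = ↑x := by
    intro x
    have h1 : Φ (MvPolynomial.X (e x)) = ↑(φ ⟨MvPolynomial.X (e x), hXmem _⟩) :=
      MvPolynomial.aeval_X _ (e x)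
    rw [h1, ← hbX (e x)]
    have h2 : φ (bX (e x)) = bB (e.symm (e x)) := Module.Basis.equiv_apply bX _ bB _
    rw [h2, Equiv.symm_apply_apply, hbB]
  -- image computation
  have himg : ∀ s' : Set M, s' ⊆ B →
      Φ '' (MvPolynomial.X '' (e '' (((↑) : B → M) ⁻¹' s'))) = s' := by
    intro s' hs'
    rw [← Set.image_comp, ← Set.image_comp]
    have : ((⇑Φ ∘ MvPolynomial.X) ∘ ⇑e) = fun x : ↥B => (x : M) := by
      funext x; exact hΦX x
    rw [this]
    rw [show (fun x : ↥B => (x : M)) '' (((↑) : B → M) ⁻¹' s')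
        = ((↑) : B → M) '' (((↑) : B → M) ⁻¹' s') from rfl,
      Subtype.image_preimage_coe]
    exact Set.inter_eq_self_of_subset_right hs'
  -- index sets
  set T₁ : Set σ := e '' (((↑) : B → M) ⁻¹' s₁) with hT₁
  set T₂ : Set σ := e '' (((↑) : B → M) ⁻¹' s₂) with hT₂
  have hT₀ : T₁ ∩ T₂ = e '' (((↑) : B → M) ⁻¹' s₀) := by
    rw [hT₁, hT₂, ← Set.image_inter (e.injective), ← Set.preimage_inter, hs12]
  -- mapping adjoin of variables through Φ
  have hmap : ∀ (s' : Set M) (t : Set σ), s' ⊆ B →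
      t = e '' (((↑) : B → M) ⁻¹' s') →
      Subalgebra.map Φ (Algebra.adjoin K (MvPolynomial.X '' t))
        = Algebra.adjoin K (Submodule.span K s' : Set M) := by
    intro s' t hs' ht
    rw [AlgHom.map_adjoin, ht, himg s' hs', Algebra.adjoin_span]
  have hmap₁ := hmap s₁ T₁ (Set.union_subset_iff.1 hsB).1 hT₁
  have hmap₂ := hmap s₂ T₂ (Set.union_subset_iff.1 hsB).2 hT₂
  have hmap₀ := hmap s₀ (T₁ ∩ T₂) ((hs₀s₁.trans (Set.union_subset_iff.1 hsB).1)) hT₀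
  rw [hspan₁] at hmap₁
  rw [hspan₂] at hmap₂
  rw [hspan₀] at hmap₀
  -- intersection of supported subalgebras
  have hsup : Algebra.adjoin K (MvPolynomial.X '' T₁ : Set M) ⊓
      Algebra.adjoin K (MvPolynomial.X '' T₂ : Set M)
        = Algebra.adjoin K (MvPolynomial.X '' (T₁ ∩ T₂) : Set M) := by
    rw [aux_adjoin_X_image T₁, aux_adjoin_X_image T₂, aux_adjoin_X_image (T₁ ∩ T₂),
      aux_supported_inf]
  calc
    Algebra.adjoin K (S₁ : Set M) ⊓ Algebra.adjoin K (S₂ : Set M)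
        = Subalgebra.map Φ (Algebra.adjoin K (MvPolynomial.X '' T₁)) ⊓
            Subalgebra.map Φ (Algebra.adjoin K (MvPolynomial.X '' T₂)) := by
          rw [hmap₁, hmap₂]
    _ = Subalgebra.map Φ (Algebra.adjoin K (MvPolynomial.X '' T₁) ⊓
            Algebra.adjoin K (MvPolynomial.X '' T₂)) :=
          (Algebra.map_inf Φ hΦinj _ _).symm
    _ = Subalgebra.map Φ (Algebra.adjoin K (MvPolynomial.X '' (T₁ ∩ T₂))) := by rw [hsup]
    _ = Algebra.adjoin K ((S₁ ⊓ S₂ : Submodule K M) : Set M) := hmap₀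
end

section
/- Let G be a nilpotent group, with lower central series G = G¹ ⊇ G² ⊇ ⋯ ⊇ Gⁿ⁺¹ = {e}, such that each quotient Gʳ/Gʳ⁺¹ is a uniquely divisible abelian group (i.e., a ℚ-vector space). Then G itself is uniquely divisible: for every positive integer p the map g ↦ gᵖ is a bijection of G. -/
open scoped commutatorElement

private lemma aux_comm_mem {G : Type*} [Group G] {r : ℕ} {c : G}
    (hc : c ∈ (⊤ : Subgroup G).lowerCentralSeries r) (x : G) :
    ⁅c, x⁆ ∈ (⊤ : Subgroup G).lowerCentralSeries (r + 1) := by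
  show ⁅c, x⁆ ∈ ⁅(⊤ : Subgroup G).lowerCentralSeries r, (⊤ : Subgroup G)⁆
  exact Subgroup.commutator_mem_commutator hc (Subgroup.mem_top x)

/-- A nilpotent group whose lower central series quotients `Gʳ/Gʳ⁺¹` are all
uniquely divisible (abelian) groups is itself uniquely divisible.  Here
`Gʳ = (⊤ : Subgroup G).lowerCentralSeries (r-1)` (Mathlib's series starts with `G¹ = G` at
index `0`), and `Gⁿ⁺¹ = {e}`. -/
theorem stmt_11 {G : Type*} [Group G] (n : ℕ)
    (hnilp : (⊤ : Subgroup G).lowerCentralSeries n = ⊥)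
    (habel : ∀ r : ℕ,
      ∀ x y : (⊤ : Subgroup G).lowerCentralSeries r ⧸
          (((⊤ : Subgroup G).lowerCentralSeries (r + 1)).subgroupOf ((⊤ : Subgroup G).lowerCentralSeries r)),
        x * y = y * x)
    (hq : ∀ r : ℕ, ∀ p : ℕ, 0 < p →
      Function.Bijective
        (fun x : (⊤ : Subgroup G).lowerCentralSeries r ⧸
            (((⊤ : Subgroup G).lowerCentralSeries (r + 1)).subgroupOf ((⊤ : Subgroup G).lowerCentralSeries r)) =>
          x ^ p)) :
    ∀ p : ℕ, 0 < p → Function.Bijective (fun g : G => g ^ p) := by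
  intro p hp
  -- Centrality of `L r` modulo `L (r+1)`.
  have hcent : ∀ (r : ℕ) (c : G), c ∈ (⊤ : Subgroup G).lowerCentralSeries r → ∀ x : G,
      Commute ((QuotientGroup.mk' ((⊤ : Subgroup G).lowerCentralSeries (r + 1))) c)
        ((QuotientGroup.mk' ((⊤ : Subgroup G).lowerCentralSeries (r + 1))) x) := by
    intro r c hc x
    have h1 : (QuotientGroup.mk' ((⊤ : Subgroup G).lowerCentralSeries (r + 1))) ⁅c, x⁆ = 1 :=
      (QuotientGroup.eq_one_iff _).mpr (aux_comm_mem hc x)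
    rw [map_commutatorElement] at h1
    exact commutatorElement_eq_one_iff_mul_comm.mp h1
  -- From `c ∈ L r` and `c ^ p ∈ L (r+1)`, conclude `c ∈ L (r+1)` (injectivity
  -- on the quotient).
  have hinj : ∀ (r : ℕ) (c : G) (hc : c ∈ (⊤ : Subgroup G).lowerCentralSeries r),
      c ^ p ∈ (⊤ : Subgroup G).lowerCentralSeries (r + 1) → c ∈ (⊤ : Subgroup G).lowerCentralSeries (r + 1) := by
    intro r c hc hcp
    set K := (⊤ : Subgroup G).lowerCentralSeries r
    set N' := ((⊤ : Subgroup G).lowerCentralSeries (r + 1)).subgroupOf K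
    have h1 : ((QuotientGroup.mk' N') ⟨c, hc⟩ : K ⧸ N') = 1 := by
      apply (hq r p hp).1
      show ((QuotientGroup.mk' N') ⟨c, hc⟩) ^ p = (1 : K ⧸ N') ^ p
      rw [one_pow, ← map_pow]
      exact (QuotientGroup.eq_one_iff _).mpr hcp
    rw [QuotientGroup.mk'_apply] at h1
    exact (QuotientGroup.eq_one_iff (⟨c, hc⟩ : K)).mp h1
  -- From `c ∈ L r`, find `d ∈ L r` with `d ^ p * c ∈ L (r+1)` (surjectivity on
  -- the quotient).
  have hsurj : ∀ (r : ℕ) (c : G) (hc : c ∈ (⊤ : Subgroup G).lowerCentralSeries r),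
      ∃ d ∈ (⊤ : Subgroup G).lowerCentralSeries r, d ^ p * c ∈ (⊤ : Subgroup G).lowerCentralSeries (r + 1) := by
    intro r c hc
    set K := (⊤ : Subgroup G).lowerCentralSeries r
    set N' := ((⊤ : Subgroup G).lowerCentralSeries (r + 1)).subgroupOf K
    obtain ⟨y, hy⟩ := (hq r p hp).2 (((QuotientGroup.mk' N') ⟨c, hc⟩)⁻¹)
    obtain ⟨e, rfl⟩ := QuotientGroup.mk'_surjective N' y
    refine ⟨(e : G), e.2, ?_⟩
    have h1 : ((QuotientGroup.mk' N') (e ^ p * ⟨c, hc⟩) : K ⧸ N') = 1 := by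
      rw [map_mul, map_pow]
      simp only at hy
      rw [hy]
      simp
      exact inv_mul_cancel _
    have h2 := (QuotientGroup.eq_one_iff _).mp h1
    exact h2
  constructor
  · -- injectivity
    intro a b hab
    simp only at hab
    have key : ∀ r, a * b⁻¹ ∈ (⊤ : Subgroup G).lowerCentralSeries r := by
      intro r
      induction r with
      | zero => exact Subgroup.mem_top _
      | succ r ih =>
        apply hinj r _ ih
        set N := (⊤ : Subgroup G).lowerCentralSeries (r + 1)
        rw [← QuotientGroup.eq_one_iff ((a * b⁻¹) ^ p) (N := N)]
        show (QuotientGroup.mk' N) ((a * b⁻¹) ^ p) = 1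
        rw [map_pow]
        have hcom := hcent r (a * b⁻¹) ih b
        have : (QuotientGroup.mk' N) a =
            (QuotientGroup.mk' N) (a * b⁻¹) * (QuotientGroup.mk' N) b := by
          rw [← map_mul]; group
        have hpow : ((QuotientGroup.mk' N) a) ^ p =
            ((QuotientGroup.mk' N) (a * b⁻¹)) ^ p * ((QuotientGroup.mk' N) b) ^ p := by
          rw [this, hcom.mul_pow]
        have hab' : ((QuotientGroup.mk' N) a) ^ p = ((QuotientGroup.mk' N) b) ^ p := by
          rw [← map_pow, ← map_pow, hab]
        rw [hab'] at hpow
        exact mul_right_cancel (b := ((QuotientGroup.mk' N) b) ^ p) (by rw [one_mul]; exact hpow.symm)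
    have := key n
    rw [hnilp, Subgroup.mem_bot, mul_inv_eq_one] at this
    exact this
  · -- surjectivity
    intro g
    have key : ∀ r, ∃ h : G, h ^ p * g⁻¹ ∈ (⊤ : Subgroup G).lowerCentralSeries r := by
      intro r
      induction r with
      | zero => exact ⟨g, Subgroup.mem_top _⟩
      | succ r ih =>
        obtain ⟨h, hh⟩ := ih
        obtain ⟨d, hd, hdp⟩ := hsurj r _ hh
        refine ⟨d * h, ?_⟩
        set N := (⊤ : Subgroup G).lowerCentralSeries (r + 1)
        rw [← QuotientGroup.eq_one_iff ((d * h) ^ p * g⁻¹) (N := N)]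
        show (QuotientGroup.mk' N) ((d * h) ^ p * g⁻¹) = 1
        have hcom := hcent r d hd h
        have : (QuotientGroup.mk' N) ((d * h) ^ p * g⁻¹) =
            ((QuotientGroup.mk' N) d * (QuotientGroup.mk' N) h) ^ p *
              ((QuotientGroup.mk' N) g)⁻¹ := by
          simp [map_mul, map_pow]
        rw [this, hcom.mul_pow]
        have h1 : ((QuotientGroup.mk' N) h) ^ p * ((QuotientGroup.mk' N) g)⁻¹ =
            (QuotientGroup.mk' N) (h ^ p * g⁻¹) := by
          simp [map_mul, map_pow]
        have h2 : ((QuotientGroup.mk' N) d) ^ p * (QuotientGroup.mk' N) (h ^ p * g⁻¹) =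
            (QuotientGroup.mk' N) (d ^ p * (h ^ p * g⁻¹)) := by
          simp [map_mul, map_pow]
        rw [mul_assoc, h1, h2]
        apply (QuotientGroup.eq_one_iff _).mpr
        have : d ^ p * (h ^ p * g⁻¹) ∈ N := by
          exact hdp
        exact this
    obtain ⟨h, hh⟩ := key n
    rw [hnilp, Subgroup.mem_bot, mul_eq_one_iff_eq_inv, inv_inv] at hh
    exact ⟨h, hh⟩
end
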